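/- If y is absolutely continuous on [-1,1] with y' in L^2(-1,1) and satisfies ∫_{-1}^{1} y(t) dt = 0 and ∫_{-1}^{1} t·y(t) dt = 0, then for every x in (-1,1), |y(x)|^2 ≤ ((8 - 21x^2 + 30x^4 - 5x^6)/48) · ∫_{-1}^{1} |y'(t)|^2 dt. -/

import Mathlib

open MeasureTheory Set intervalIntegral

lemma cs_sq {α : Type*} [MeasurableSpace α] {μ : Measure α} (f g : α → ℝ)
    (hf : MemLp f 2 μ) (hg : MemLp g 2 μ) :
    (∫ a, f a * g a ∂μ) ^ 2 ≤ (∫ a, f a ^ 2 ∂μ) * (∫ a, g a ^ 2 ∂μ) := by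
  have hpq : (2:ℝ).HolderConjugate 2 := ⟨by norm_num, by norm_num, by norm_num⟩
  have h2 : (ENNReal.ofReal (2:ℝ)) = 2 := by simp [ENNReal.ofReal_ofNat]
  have hf' : MemLp (fun a => |f a|) (ENNReal.ofReal (2:ℝ)) μ := by rw [h2]; exact hf.abs
  have hg' : MemLp (fun a => |g a|) (ENNReal.ofReal (2:ℝ)) μ := by rw [h2]; exact hg.abs
  have hH := MeasureTheory.integral_mul_le_Lp_mul_Lq_of_nonneg hpq
    (Filter.Eventually.of_forall fun a => abs_nonneg (f a))
    (Filter.Eventually.of_forall fun a => abs_nonneg (g a)) hf' hg'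
  have habs : |∫ a, f a * g a ∂μ| ≤ ∫ a, |f a| * |g a| ∂μ := by
    simpa [Real.norm_eq_abs, abs_mul] using
      norm_integral_le_integral_norm (μ := μ) (fun a => f a * g a)
  have hA : ∫ a, |f a| ^ (2:ℝ) ∂μ = ∫ a, f a ^ 2 ∂μ := by
    refine integral_congr_ae (Filter.Eventually.of_forall fun a => ?_)
    show _ ^ (2:ℝ) = _
    rw [show ((2:ℝ) = ((2:ℕ):ℝ)) by norm_num, Real.rpow_natCast, sq_abs]
  have hB : ∫ a, |g a| ^ (2:ℝ) ∂μ = ∫ a, g a ^ 2 ∂μ := by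
    refine integral_congr_ae (Filter.Eventually.of_forall fun a => ?_)
    show _ ^ (2:ℝ) = _
    rw [show ((2:ℝ) = ((2:ℕ):ℝ)) by norm_num, Real.rpow_natCast, sq_abs]
  rw [hA, hB] at hH
  have hAnn : (0:ℝ) ≤ ∫ a, f a ^ 2 ∂μ := integral_nonneg fun a => sq_nonneg _
  have hBnn : (0:ℝ) ≤ ∫ a, g a ^ 2 ∂μ := integral_nonneg fun a => sq_nonneg _
  have key : |∫ a, f a * g a ∂μ| ≤ (∫ a, f a ^ 2 ∂μ) ^ ((1:ℝ)/2) * (∫ a, g a ^ 2 ∂μ) ^ ((1:ℝ)/2) :=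
    habs.trans hH
  calc (∫ a, f a * g a ∂μ) ^ 2 = |∫ a, f a * g a ∂μ| ^ 2 := (sq_abs _).symm
    _ ≤ ((∫ a, f a ^ 2 ∂μ) ^ ((1:ℝ)/2) * (∫ a, g a ^ 2 ∂μ) ^ ((1:ℝ)/2)) ^ 2 :=
        pow_le_pow_left₀ (abs_nonneg _) key 2
    _ = (∫ a, f a ^ 2 ∂μ) * (∫ a, g a ^ 2 ∂μ) := by
        rw [mul_pow, ← Real.rpow_natCast ((∫ a, f a ^ 2 ∂μ) ^ ((1:ℝ)/2)) 2,
          ← Real.rpow_natCast ((∫ a, g a ^ 2 ∂μ) ^ ((1:ℝ)/2)) 2,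
          ← Real.rpow_mul hAnn, ← Real.rpow_mul hBnn]
        norm_num

open MeasureTheory Set intervalIntegral

lemma sq_poly_int (A B C u v : ℝ) :
    ∫ s in u..v, (A + B * s + C * s ^ 2) ^ 2 =
      A ^ 2 * (v - u) + (2 * A * B) * (v ^ 2 - u ^ 2) / 2 +
        (B ^ 2 + 2 * A * C) * (v ^ 3 - u ^ 3) / 3 + (2 * B * C) * (v ^ 4 - u ^ 4) / 4 +
        C ^ 2 * (v ^ 5 - u ^ 5) / 5 := by
  have hd : ∀ t : ℝ, HasDerivAt
      (fun t : ℝ => A ^ 2 * t + (2 * A * B) * t ^ 2 / 2 + (B ^ 2 + 2 * A * C) * t ^ 3 / 3 +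
        (2 * B * C) * t ^ 4 / 4 + C ^ 2 * t ^ 5 / 5)
      ((A + B * t + C * t ^ 2) ^ 2) t := by
    intro t
    have h := (((((hasDerivAt_id t).const_mul (A ^ 2)).add
      (((hasDerivAt_pow 2 t).const_mul (2 * A * B)).div_const 2)).add
      (((hasDerivAt_pow 3 t).const_mul (B ^ 2 + 2 * A * C)).div_const 3)).add
      (((hasDerivAt_pow 4 t).const_mul (2 * B * C)).div_const 4)).add
      (((hasDerivAt_pow 5 t).const_mul (C ^ 2)).div_const 5)
    refine (h.congr_deriv ?_).congr_of_eventuallyEq (Filter.Eventually.of_forall fun s => ?_)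
    · norm_num
      ring
    · simp only [Pi.add_apply, id]
  rw [intervalIntegral.integral_eq_sub_of_hasDerivAt (fun t _ => hd t)
    ((Continuous.intervalIntegrable (by fun_prop) u v))]
  ring

open MeasureTheory Set intervalIntegral

lemma swap_lemma (g : ℝ → ℝ) (hg : IntegrableOn g (Ioc (-1:ℝ) 1) volume)
    (h H : ℝ → ℝ) (hh : Continuous h)
    (hH : ∀ s ∈ Ioc (-1:ℝ) 1, H s = ∫ t in s..(1:ℝ), h t) :
    (∫ t in (-1:ℝ)..1, h t * ∫ s in (-1:ℝ)..t, g s) = ∫ s in (-1:ℝ)..1, H s * g s := by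
  have h11 : (-1:ℝ) ≤ 1 := by norm_num
  rw [intervalIntegral.integral_of_le h11, intervalIntegral.integral_of_le h11]
  set μ := volume.restrict (Ioc (-1:ℝ) 1) with hμ
  have hhi : Integrable h μ := hh.integrableOn_Ioc
  set f : ℝ × ℝ → ℝ := {q : ℝ × ℝ | q.2 ≤ q.1}.indicator (fun q => h q.1 * g q.2) with hf
  have hfint : Integrable f (μ.prod μ) :=
    (hhi.mul_prod hg).indicator (measurableSet_le measurable_snd measurable_fst)
  have hfu : Integrable (Function.uncurry fun t s => f (t, s)) (μ.prod μ) := hfint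
  have step1 : (∫ t, (h t * ∫ s in (-1:ℝ)..t, g s) ∂μ) = ∫ t, ∫ s, f (t, s) ∂μ ∂μ := by
    refine MeasureTheory.integral_congr_ae ?_
    filter_upwards [ae_restrict_mem measurableSet_Ioc] with t ht
    have hfe : (fun s => f (t, s)) = (Iic t).indicator (fun s => h t * g s) := by
      funext s
      by_cases hs : s ≤ t <;> simp [f, Set.indicator, hs]
    rw [hfe, setIntegral_indicator measurableSet_Iic]
    have hset : Ioc (-1:ℝ) 1 ∩ Iic t = Ioc (-1) t := by
      ext u
      simp only [mem_inter_iff, mem_Ioc, mem_Iic]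
      exact ⟨fun ⟨⟨a, _⟩, b⟩ => ⟨a, b⟩, fun ⟨a, b⟩ => ⟨⟨a, b.trans ht.2⟩, b⟩⟩
    rw [hset, MeasureTheory.integral_const_mul, ← intervalIntegral.integral_of_le ht.1.le]
  have step2 : (∫ t, ∫ s, f (t, s) ∂μ ∂μ) = ∫ s, ∫ t, f (t, s) ∂μ ∂μ :=
    integral_integral_swap hfu
  have step3 : (∫ s, ∫ t, f (t, s) ∂μ ∂μ) = ∫ s, H s * g s ∂μ := by
    refine MeasureTheory.integral_congr_ae ?_
    filter_upwards [ae_restrict_mem measurableSet_Ioc] with s hs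
    have hfe : (fun t => f (t, s)) = (Ici s).indicator (fun t => h t * g s) := by
      funext t
      by_cases ht : s ≤ t <;> simp [f, Set.indicator, ht]
    rw [hfe, setIntegral_indicator measurableSet_Ici]
    have hset : Ioc (-1:ℝ) 1 ∩ Ici s = Icc s 1 := by
      ext u
      simp only [mem_inter_iff, mem_Ioc, mem_Icc, mem_Ici]
      exact ⟨fun ⟨⟨_, b⟩, c⟩ => ⟨c, b⟩, fun ⟨a, b⟩ => ⟨⟨lt_of_lt_of_le hs.1 a, b⟩, a⟩⟩
    rw [hset, MeasureTheory.integral_mul_const, integral_Icc_eq_integral_Ioc,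
      ← intervalIntegral.integral_of_le hs.2, ← hH s hs]
  exact step1.trans (step2.trans step3)

/-- `W12 y g` : `y` is absolutely continuous on `[-1,1]` with derivative `g ∈ L²(-1,1)`. -/
def W12 (y g : ℝ → ℝ) : Prop :=
  IntervalIntegrable g MeasureTheory.volume (-1) 1 ∧
  IntervalIntegrable (fun t => g t ^ 2) MeasureTheory.volume (-1) 1 ∧
  ∀ t ∈ Set.Icc (-1 : ℝ) 1, y t = y (-1) + ∫ s in (-1 : ℝ)..t, g s

theorem poincare_m2 (y g : ℝ → ℝ) (hW : W12 y g)
    (h0 : (∫ t in (-1:ℝ)..1, y t) = 0)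
    (h1 : (∫ t in (-1:ℝ)..1, t * y t) = 0) :
    ∀ x ∈ Set.Ioo (-1:ℝ) 1,
      (y x) ^ 2 ≤ (8 - 21 * x ^ 2 + 30 * x ^ 4 - 5 * x ^ 6) / 48 *
        ∫ t in (-1:ℝ)..1, (g t) ^ 2 := by
  obtain ⟨hg, hg2, hy⟩ := hW
  intro x hx
  have h11 : (-1:ℝ) ≤ 1 := by norm_num
  have hx1 : (-1:ℝ) ≤ x := hx.1.le
  have hx2 : x ≤ 1 := hx.2.le
  have hgIoc : IntegrableOn g (Ioc (-1:ℝ) 1) volume :=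
    (intervalIntegrable_iff_integrableOn_Ioc_of_le h11).1 hg
  have hg2Ioc : IntegrableOn (fun t => g t ^ 2) (Ioc (-1:ℝ) 1) volume :=
    (intervalIntegrable_iff_integrableOn_Ioc_of_le h11).1 hg2
  set μ := volume.restrict (Ioc (-1:ℝ) 1) with hμ
  haveI : IsFiniteMeasure μ := by
    constructor
    rw [hμ, Measure.restrict_apply_univ]
    exact measure_Ioc_lt_top
  set c := y (-1) with hc
  set F : ℝ → ℝ := fun t => ∫ s in (-1:ℝ)..t, g s with hFdef
  have hgIcc : IntegrableOn g (Icc (-1:ℝ) 1) volume := by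
    rw [integrableOn_Icc_iff_integrableOn_Ioc]; exact hgIoc
  have hFc : ContinuousOn F (uIcc (-1:ℝ) 1) := by
    apply intervalIntegral.continuousOn_primitive_interval
    rwa [uIcc_of_le h11]
  have hFint : IntervalIntegrable F volume (-1) 1 := hFc.intervalIntegrable
  -- Fubini identities
  have sw0 : ∫ t in (-1:ℝ)..1, F t = ∫ s in (-1:ℝ)..1, (1 - s) * g s := by
    have := swap_lemma g hgIoc (fun _ => 1) (fun s => 1 - s) continuous_const
      (fun s hs => by simp)
    simpa only [one_mul] using this
  have sw1 : ∫ t in (-1:ℝ)..1, t * F t = ∫ s in (-1:ℝ)..1, ((1 - s^2)/2) * g s :=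
    swap_lemma g hgIoc (fun t => t) (fun s => (1 - s^2)/2) continuous_id
      (fun s hs => by rw [integral_id]; norm_num)
  -- constraint 0
  have hyF : EqOn y (fun t => c + F t) (Icc (-1:ℝ) 1) := fun t ht => hy t ht
  have e0 : 2 * c + ∫ s in (-1:ℝ)..1, (1 - s) * g s = 0 := by
    have h0' : ∫ t in (-1:ℝ)..1, (c + F t) = 0 := by
      rw [← h0]; symm; apply intervalIntegral.integral_congr; rwa [uIcc_of_le h11]
    rw [intervalIntegral.integral_add intervalIntegrable_const hFint,
      intervalIntegral.integral_const, smul_eq_mul] at h0'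
    rw [← sw0]
    linarith
  -- constraint 1
  have e1 : ∫ s in (-1:ℝ)..1, (1 - s^2) * g s = 0 := by
    have int_tc : IntervalIntegrable (fun t => t * c) volume (-1) 1 :=
      (Continuous.intervalIntegrable (by fun_prop) _ _)
    have int_tF : IntervalIntegrable (fun t => t * F t) volume (-1) 1 :=
      (continuousOn_id.mul hFc).intervalIntegrable
    have h1' : ∫ t in (-1:ℝ)..1, (t * c + t * F t) = 0 := by
      rw [← h1]; symm; apply intervalIntegral.integral_congr
      intro t ht
      rw [uIcc_of_le h11] at ht
      show t * y t = t * c + t * F t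
      rw [hyF ht]; ring
    rw [intervalIntegral.integral_add int_tc int_tF, intervalIntegral.integral_mul_const,
      integral_id] at h1'
    have hdb : ∫ s in (-1:ℝ)..1, (1 - s^2) * g s
        = 2 * ∫ s in (-1:ℝ)..1, ((1 - s^2)/2) * g s := by
      rw [← intervalIntegral.integral_const_mul]
      apply intervalIntegral.integral_congr
      intro s _
      ring
    rw [hdb, ← sw1]
    norm_num at h1'
    linarith
  -- kernel
  set l : ℝ := -(15/16) * (x - x^3/3) with hl
  set χ : ℝ → ℝ := fun s => if s ≤ x then (1:ℝ) else 0 with hχ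
  set K : ℝ → ℝ := fun s => χ s - (1 - s)/2 + l * (1 - s^2) with hK
  have hχg : (fun s => χ s * g s) = (Iic x).indicator g := by
    funext s
    by_cases hs : s ≤ x <;> simp [hχ, Set.indicator, hs]
  have hχint : IntervalIntegrable (fun s => χ s * g s) volume (-1) 1 := by
    rw [intervalIntegrable_iff_integrableOn_Ioc_of_le h11, hχg]
    exact hgIoc.indicator measurableSet_Iic
  have hsetx : Ioc (-1:ℝ) 1 ∩ Iic x = Ioc (-1) x := by
    ext u
    simp only [mem_inter_iff, mem_Ioc, mem_Iic]
    exact ⟨fun ⟨⟨a, _⟩, b⟩ => ⟨a, b⟩, fun ⟨a, b⟩ => ⟨⟨a, b.trans hx2⟩, b⟩⟩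
  have hT1 : ∫ s in (-1:ℝ)..x, g s = ∫ s in (-1:ℝ)..1, χ s * g s := by
    rw [intervalIntegral.integral_of_le hx1, intervalIntegral.integral_of_le h11]
    calc ∫ s in Ioc (-1:ℝ) x, g s = ∫ s in Ioc (-1:ℝ) 1 ∩ Iic x, g s := by rw [hsetx]
      _ = ∫ s in Ioc (-1:ℝ) 1, (Iic x).indicator g s := (setIntegral_indicator measurableSet_Iic).symm
      _ = ∫ s in Ioc (-1:ℝ) 1, χ s * g s := by rw [← hχg]
  -- representation of y x
  have hyx : y x = ∫ s in (-1:ℝ)..1, K s * g s := by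
    have intw : IntervalIntegrable (fun s => (1 - s) * g s) volume (-1) 1 :=
      hg.continuousOn_mul (by fun_prop)
    have intq : IntervalIntegrable (fun s => (1 - s^2) * g s) volume (-1) 1 :=
      hg.continuousOn_mul (by fun_prop)
    have hsplit : ∫ s in (-1:ℝ)..1, K s * g s
        = (∫ s in (-1:ℝ)..1, χ s * g s) + ((-(1/2)) * ∫ s in (-1:ℝ)..1, (1 - s) * g s)
          + (l * ∫ s in (-1:ℝ)..1, (1 - s^2) * g s) := by
      rw [← intervalIntegral.integral_const_mul, ← intervalIntegral.integral_const_mul,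
        ← intervalIntegral.integral_add hχint (intw.const_mul _),
        ← intervalIntegral.integral_add (hχint.add (intw.const_mul _)) (intq.const_mul _)]
      apply intervalIntegral.integral_congr
      intro s _
      show K s * g s = _
      rw [hK]
      ring
    have hIw : ∫ s in (-1:ℝ)..1, (1 - s) * g s = -(2*c) := by linarith
    have hyx0 : y x = c + F x := hy x ⟨hx1, hx2⟩
    rw [hsplit, ← hT1, hIw, e1, hyx0]
    show c + F x = F x + -(1/2) * -(2*c) + l * 0
    ring
  -- Memℒp facts
  have hχm : Measurable χ := by
    rw [hχ]
    exact Measurable.ite (measurableSet_le measurable_id measurable_const)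
      measurable_const measurable_const
  have hKmeas : Measurable K := by
    rw [hK]
    exact (hχm.sub (by fun_prop)).add (by fun_prop)
  have hKmem : MemLp K 2 μ := by
    apply MemLp.of_bound hKmeas.aestronglyMeasurable (2 + |l|)
    filter_upwards [ae_restrict_mem measurableSet_Ioc] with s hs
    have h1s : 0 ≤ 1 - s^2 := by nlinarith [hs.1, hs.2]
    have h2s : 1 - s^2 ≤ 1 := by nlinarith
    have hl1 : l * (1 - s^2) ≤ |l| := by
      calc l * (1 - s^2) ≤ |l| * (1 - s^2) := mul_le_mul_of_nonneg_right (le_abs_self l) h1s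
        _ ≤ |l| * 1 := mul_le_mul_of_nonneg_left h2s (abs_nonneg l)
        _ = |l| := mul_one _
    have hl2 : -|l| ≤ l * (1 - s^2) := by
      calc -|l| = -|l| * 1 := (mul_one _).symm
        _ ≤ -|l| * (1 - s^2) := mul_le_mul_of_nonpos_left h2s (neg_nonpos.mpr (abs_nonneg l))
        _ ≤ l * (1 - s^2) := mul_le_mul_of_nonneg_right (neg_abs_le l) h1s
    have hχb : 0 ≤ χ s ∧ χ s ≤ 1 := by
      rw [hχ]
      by_cases h : s ≤ x <;> simp [h]
    have hKs : K s = χ s - (1 - s)/2 + l * (1 - s^2) := by rw [hK]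
    rw [Real.norm_eq_abs, abs_le, hKs]
    constructor
    · nlinarith [hs.1, hs.2, hχb.1, hχb.2]
    · nlinarith [hs.1, hs.2, hχb.1, hχb.2]
  have hgmem : MemLp g 2 μ := (memLp_two_iff_integrable_sq hgIoc.aestronglyMeasurable).2 hg2Ioc
  -- integral of K²
  have hKsqOn : IntegrableOn (fun s => K s ^ 2) (Ioc (-1:ℝ) 1) volume := hKmem.integrable_sq
  have i1 : IntervalIntegrable (fun s => K s ^ 2) volume (-1) x :=
    (intervalIntegrable_iff_integrableOn_Ioc_of_le hx1).2
      (hKsqOn.mono_set (Ioc_subset_Ioc_right hx2))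
  have i2 : IntervalIntegrable (fun s => K s ^ 2) volume x 1 :=
    (intervalIntegrable_iff_integrableOn_Ioc_of_le hx2).2
      (hKsqOn.mono_set (Ioc_subset_Ioc_left hx1))
  have hKsq : ∫ s in (-1:ℝ)..1, K s ^ 2 = (8 - 21*x^2 + 30*x^4 - 5*x^6)/48 := by
    rw [← intervalIntegral.integral_add_adjacent_intervals i1 i2]
    have q1 : ∫ s in (-1:ℝ)..x, K s ^ 2
        = ∫ s in (-1:ℝ)..x, ((l + 1/2) + (1/2)*s + (-l)*s^2)^2 := by
      apply intervalIntegral.integral_congr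
      intro s hs
      rw [uIcc_of_le hx1] at hs
      show K s ^ 2 = _
      rw [hK]
      simp only [hχ]
      rw [if_pos hs.2]
      ring
    have q2 : ∫ s in x..(1:ℝ), K s ^ 2
        = ∫ s in x..(1:ℝ), ((l - 1/2) + (1/2)*s + (-l)*s^2)^2 := by
      apply intervalIntegral.integral_congr_ae
      filter_upwards with s hs
      rw [uIoc_of_le hx2] at hs
      show K s ^ 2 = _
      rw [hK]
      simp only [hχ]
      rw [if_neg (not_le.mpr hs.1)]
      ring
    rw [q1, q2, sq_poly_int, sq_poly_int, hl]
    ring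
  -- conclusion
  have final := cs_sq (μ := μ) K g hKmem hgmem
  calc (y x)^2 = (∫ s, K s * g s ∂μ)^2 := by
        rw [hyx, intervalIntegral.integral_of_le h11]
    _ ≤ (∫ s, K s ^ 2 ∂μ) * (∫ s, g s ^ 2 ∂μ) := final
    _ = (8 - 21 * x ^ 2 + 30 * x ^ 4 - 5 * x ^ 6) / 48 * ∫ t in (-1:ℝ)..1, (g t)^2 := by
        rw [← intervalIntegral.integral_of_le h11, hKsq, intervalIntegral.integral_of_le h11]
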